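/- Weak subobjects in Rec correspond to subobjects in assemblies: for every A ⊆ ℕ, the map sending the class of a morphism f : B → A of Rec to the subobject of Sgl(A) in Asm represented by the monomorphism j : (f(B), c ↦ {b ∈ B : f(b) = c}) → Sgl(A), whose underlying function is the inclusion of the image f(B) into A, is an order-isomorphism between wSub_Rec(A) and Sub_Asm(Sgl(A)), and these isomorphisms are natural in A (they commute with reindexing by pullback along morphisms of Rec). -/

import Mathlib

open CategoryTheory

namespace RecPaper

/-- Kleene application `{e}(n)`: apply the partial recursive function with Gödel code `e`
to the input `n`. -/
def kap (e n : ℕ) : Part ℕ :=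
  Nat.Partrec.Code.eval (Denumerable.ofNat Nat.Partrec.Code e) n

/-- The type of objects of the category `Rec`: subsets of `ℕ`. -/
def RecCat : Type := Set ℕ

/-- The underlying subset of `ℕ` of an object of `Rec`. -/
def RecCat.carrier (A : RecCat) : Set ℕ := A

/-- View a subset of `ℕ` as an object of `Rec`. -/
def RecCat.ofSet (A : Set ℕ) : RecCat := A

instance : CoeSort RecCat Type := ⟨fun A => {n : ℕ // n ∈ A.carrier}⟩

/-- A function between subsets of `ℕ` is *tracked* if there is a partial recursive
function, defined on the whole domain, whose restriction to the domain is the given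
function. -/
def Tracked {A B : RecCat} (f : A → B) : Prop :=
  ∃ g : ℕ →. ℕ, Nat.Partrec g ∧ ∀ a : A, g a.val = Part.some (f a).val

/-- The category `Rec` of subsets of `ℕ` and restrictions of partial recursive functions. -/
instance : Category RecCat where
  Hom A B := {f : A → B // Tracked f}
  id A := ⟨fun a => a, (fun n => n : ℕ → ℕ), Nat.Partrec.of_primrec Nat.Primrec.id,
    fun _ => rfl⟩
  comp {A B C} f g := ⟨fun a => g.1 (f.1 a), by
    obtain ⟨u, pu, hu⟩ := f.2
    obtain ⟨v, pv, hv⟩ := g.2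
    refine ⟨fun n => u n >>= v, pv.comp pu, fun a => ?_⟩
    show u a.val >>= v = _
    rw [hu a]; exact (Part.bind_some _ v).trans (hv (f.1 a))⟩
  id_comp _ := rfl
  comp_id _ := rfl
  assoc _ _ _ := rfl

/-- The underlying function of a morphism of `Rec`. -/
def hfun {A B : RecCat} (f : A ⟶ B) : A → B := f.1

/-- The value of a morphism of `Rec` on an element, as a natural number. -/
def happ {A B : RecCat} (f : A ⟶ B) (a : A) : ℕ := (hfun f a).val


/-- Objects of the category `Asm` of assemblies: a set together with nonempty sets of
realizers. -/
structure AsmObj : Type 1 where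
  carrier : Type
  real : carrier → Set ℕ
  hne : ∀ a, (real a).Nonempty

/-- Tracking for functions between assemblies: some partial recursive function sends
realizers of `a` to realizers of `f a`. -/
def AsmTracked {X Y : AsmObj} (f : X.carrier → Y.carrier) : Prop :=
  ∃ g : ℕ →. ℕ, Nat.Partrec g ∧
    ∀ a : X.carrier, ∀ n ∈ X.real a, ∃ v ∈ Y.real (f a), g n = Part.some v

/-- The category `Asm` of assemblies. -/
instance : Category AsmObj where
  Hom X Y := {f : X.carrier → Y.carrier // AsmTracked f}
  id X := ⟨fun a => a, (fun n => n : ℕ → ℕ), Nat.Partrec.of_primrec Nat.Primrec.id,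
    fun _ n hn => ⟨n, hn, rfl⟩⟩
  comp {X Y Z} f g := ⟨fun a => g.1 (f.1 a), by
    obtain ⟨u, pu, hu⟩ := f.2
    obtain ⟨v, pv, hv⟩ := g.2
    refine ⟨fun n => u n >>= v, pv.comp pu, fun a n hn => ?_⟩
    obtain ⟨m, hm, hum⟩ := hu a n hn
    obtain ⟨w, hw, hvw⟩ := hv (f.1 a) m hm
    exact ⟨w, hw, by
      show u n >>= v = _
      rw [hum]; exact (Part.bind_some _ v).trans hvw⟩⟩
  id_comp _ := rfl
  comp_id _ := rfl
  assoc _ _ _ := rfl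

/-- An assembly is partitioned if every set of realizers is a singleton. -/
def AsmObj.IsPartitioned (X : AsmObj) : Prop := ∀ a, ∃ n, X.real a = {n}

/-- An assembly is modest if distinct elements have disjoint sets of realizers. -/
def AsmObj.IsModest (X : AsmObj) : Prop :=
  ∀ a b, (X.real a ∩ X.real b).Nonempty → a = b

/-- The assembly `(A, a ↦ {a})` attached to an object of `Rec`. -/
def SglObj (A : RecCat) : AsmObj :=
  ⟨{n : ℕ // n ∈ A.carrier}, fun a => {a.val}, fun a => ⟨a.val, rfl⟩⟩

/-- The functor `Sgl : Rec ⥤ Asm` sending `A` to `(A, a ↦ {a})` and each morphism to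
itself. -/
def Sgl : RecCat ⥤ AsmObj where
  obj A := SglObj A
  map {A B} f := ⟨fun a => hfun f a, by
    obtain ⟨g, pg, hg⟩ := f.2
    refine ⟨g, pg, fun a n hn => ⟨(hfun f a).val, rfl, ?_⟩⟩
    have hna : n = a.val := hn
    rw [hna]
    exact hg a⟩
  map_id _ := rfl
  map_comp _ _ := rfl


/-- The image `f(B) ⊆ ℕ` of a morphism of `Rec`. -/
def imageSet {B A : RecCat} (f : B ⟶ A) : Set ℕ := {c | ∃ b : B, happ f b = c}

/-- The image assembly `(f(B), c ↦ {b ∈ B : f(b) = c})` of a morphism of `Rec`. -/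
def imAsm {B A : RecCat} (f : B ⟶ A) : AsmObj where
  carrier := {c : ℕ // c ∈ imageSet f}
  real c := {b | ∃ hb : b ∈ B.carrier, happ f ⟨b, hb⟩ = c.val}
  hne c := by
    obtain ⟨b, hb⟩ := c.2
    exact ⟨b.val, b.2, hb⟩

/-- The canonical monomorphism `imAsm f ⟶ Sgl A`, whose underlying function is the
inclusion of the image `f(B)` into `A`. -/
def jHom {B A : RecCat} (f : B ⟶ A) : imAsm f ⟶ SglObj A :=
  ⟨fun c => ⟨c.val, by obtain ⟨b, hb⟩ := c.2; rw [← hb]; exact (hfun f b).2⟩, by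
    obtain ⟨g, pg, hg⟩ := f.2
    refine ⟨g, pg, fun c n hn => ?_⟩
    obtain ⟨hb, hfb⟩ := hn
    exact ⟨c.val, rfl, by rw [← hfb]; exact hg ⟨n, hb⟩⟩⟩

lemma asmHom_ext {X Y : AsmObj} {u v : X ⟶ Y} (h : ∀ x, u.1 x = v.1 x) : u = v :=
  Subtype.ext (funext h)

lemma recHom_ext {X Y : RecCat} {u v : X ⟶ Y} (h : ∀ x, u.1 x = v.1 x) : u = v :=
  Subtype.ext (funext h)

lemma asm_mono_inj {X Y : AsmObj} (m : X ⟶ Y) [Mono m] : Function.Injective m.1 := by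
  intro x y hxy
  obtain ⟨nx, hnx⟩ := X.hne x
  obtain ⟨ny, hny⟩ := X.hne y
  let Pt : AsmObj := ⟨PUnit, fun _ => Set.univ, fun _ => ⟨0, trivial⟩⟩
  let px : Pt ⟶ X := ⟨fun _ => x, (fun _ => nx : ℕ → ℕ),
    Nat.Partrec.of_primrec (Nat.Primrec.const nx), fun _ n _ => ⟨nx, hnx, rfl⟩⟩
  let py : Pt ⟶ X := ⟨fun _ => y, (fun _ => ny : ℕ → ℕ),
    Nat.Partrec.of_primrec (Nat.Primrec.const ny), fun _ n _ => ⟨ny, hny, rfl⟩⟩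
  have hc : px ≫ m = py ≫ m := asmHom_ext fun _ => hxy
  have hpq : px = py := (cancel_mono m).1 hc
  exact congrFun (congrArg Subtype.val hpq) PUnit.unit

/-- Weak subobjects in `Rec` correspond to subobjects in `Asm`: `[f] ↦ [jHom f]` induces
an order-isomorphism between `wSub_Rec(A)` and `Sub_Asm(Sgl A)` — each `jHom f` is monic,
the assignment preserves and reflects the order, every subobject of `Sgl A` arises this
way up to mutual factorization, and the assignment commutes with reindexing by pullback
along morphisms of `Rec`. -/
theorem rec_weak_subobjects_eq_asm_subobjects :
    ∀ A : RecCat,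
      (∀ (B : RecCat) (f : B ⟶ A), Mono (jHom f)) ∧
      (∀ (B C : RecCat) (f : B ⟶ A) (g : C ⟶ A),
        (∃ h : B ⟶ C, h ≫ g = f) ↔
        (∃ k : imAsm f ⟶ imAsm g, k ≫ jHom g = jHom f)) ∧
      (∀ (X : AsmObj) (m : X ⟶ SglObj A), Mono m →
        ∃ (B : RecCat) (f : B ⟶ A) (k₁ : imAsm f ⟶ X) (k₂ : X ⟶ imAsm f),
          k₁ ≫ m = jHom f ∧ k₂ ≫ jHom f = m) ∧
      (∀ (A' : RecCat) (h : A' ⟶ A) (B : RecCat) (f : B ⟶ A)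
         (W : RecCat) (w : W ⟶ B) (f' : W ⟶ A'),
        IsPullback w f' f h →
        ∀ (V : AsmObj) (v₁ : V ⟶ imAsm f) (v₂ : V ⟶ SglObj A'),
          IsPullback v₁ v₂ (jHom f) (Sgl.map h) →
          ∃ (k₁ : imAsm f' ⟶ V) (k₂ : V ⟶ imAsm f'),
            k₁ ≫ v₂ = jHom f' ∧ k₂ ≫ jHom f' = v₂) := by
  intro A
  refine ⟨?_, ?_, ?_, ?_⟩
  · -- Part 1: jHom f is mono
    intro B f
    constructor
    intro Z u v huv
    apply asmHom_ext
    intro z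
    have h1 : ((jHom f).1 (u.1 z)).val = ((jHom f).1 (v.1 z)).val :=
      congrArg Subtype.val (congrFun (congrArg Subtype.val huv) z)
    exact Subtype.ext h1
  · -- Part 2: order preserving/reflecting
    intro B C f g
    constructor
    · rintro ⟨h, hh⟩
      obtain ⟨u, pu, hu⟩ := h.2
      have hval : ∀ b : B, happ g (h.1 b) = happ f b := fun b =>
        congrArg Subtype.val (congrFun (congrArg Subtype.val hh) b)
      refine ⟨⟨fun c => ⟨c.val, ?_⟩, u, pu, ?_⟩, ?_⟩
      · obtain ⟨b, hb⟩ := c.2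
        exact ⟨h.1 b, (hval b).trans hb⟩
      · rintro c n ⟨hb, hfb⟩
        refine ⟨(h.1 ⟨n, hb⟩).val, ⟨(h.1 ⟨n, hb⟩).2, ?_⟩, hu ⟨n, hb⟩⟩
        exact (hval ⟨n, hb⟩).trans hfb
      · exact asmHom_ext fun c => Subtype.ext rfl
    · rintro ⟨k, hk⟩
      obtain ⟨u, pu, hu⟩ := k.2
      have val_eq : ∀ c : (imAsm f).carrier, (k.1 c).val = c.val := fun c =>
        congrArg Subtype.val (congrFun (congrArg Subtype.val hk) c)
      -- the image element attached to b : B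
      let cElt : B → (imAsm f).carrier := fun b => ⟨(f.1 b).val, b, rfl⟩
      have hreal : ∀ b : B, b.val ∈ (imAsm f).real (cElt b) := fun b => ⟨b.2, rfl⟩
      have spec : ∀ b : B, ∃ v ∈ (imAsm g).real (k.1 (cElt b)), u b.val = Part.some v :=
        fun b => hu (cElt b) b.val (hreal b)
      refine ⟨⟨fun b => ⟨(spec b).choose, ((spec b).choose_spec.1).choose⟩,
        u, pu, fun b => (spec b).choose_spec.2⟩, ?_⟩
      apply recHom_ext
      intro b
      apply Subtype.ext
      exact (((spec b).choose_spec.1).choose_spec).trans (val_eq (cElt b))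
  · -- Part 3: surjectivity up to mutual factorization
    intro X m hm
    haveI := hm
    have minj : Function.Injective m.1 := asm_mono_inj m
    obtain ⟨u, pu, hu⟩ := m.2
    have hu' : ∀ x, ∀ n ∈ X.real x, u n = Part.some (m.1 x).val := by
      intro x n hn
      obtain ⟨v, hv, huv⟩ := hu x n hn
      have hv' : v = (m.1 x).val := hv
      rwa [hv'] at huv
    have key : ∀ x x' n, n ∈ X.real x → n ∈ X.real x' → x = x' := by
      intro x x' n hn hn'
      have h12 : Part.some (m.1 x).val = Part.some (m.1 x').val :=
        (hu' x n hn).symm.trans (hu' x' n hn')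
      exact minj (Subtype.ext (Part.some_inj.mp h12))
    let B : RecCat := RecCat.ofSet {n | ∃ x, n ∈ X.real x}
    let f : B ⟶ A := ⟨fun b => m.1 (b.2.choose), u, pu,
      fun b => hu' _ b.val b.2.choose_spec⟩
    have hfval : ∀ (n : ℕ) (hb : n ∈ B.carrier) (x : X.carrier), n ∈ X.real x →
        happ f ⟨n, hb⟩ = (m.1 x).val := by
      intro n hb x hn
      exact congrArg (fun y => (m.1 y).val) (key _ _ n hb.choose_spec hn)
    have memIm : ∀ x : X.carrier, (m.1 x).val ∈ imageSet f := by
      intro x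
      obtain ⟨n, hn⟩ := X.hne x
      exact ⟨⟨n, ⟨x, hn⟩⟩, hfval n ⟨x, hn⟩ x hn⟩
    -- the reverse map k₁
    have hk₁val : ∀ c : (imAsm f).carrier, (m.1 ((c.2.choose).2.choose)).val = c.val :=
      fun c => c.2.choose_spec
    refine ⟨B, f, ⟨fun c => (c.2.choose).2.choose, (fun n => n : ℕ → ℕ),
      Nat.Partrec.of_primrec Nat.Primrec.id, ?_⟩,
      ⟨fun x => ⟨(m.1 x).val, memIm x⟩, (fun n => n : ℕ → ℕ),
      Nat.Partrec.of_primrec Nat.Primrec.id, ?_⟩, ?_, ?_⟩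
    · rintro c n ⟨hb, hfb⟩
      refine ⟨n, ?_, rfl⟩
      have h1 : (m.1 hb.choose).val = c.val :=
        (hfval n hb hb.choose hb.choose_spec).symm.trans hfb
      have h2 : hb.choose = (c.2.choose).2.choose :=
        minj (Subtype.ext (h1.trans (hk₁val c).symm))
      show n ∈ X.real ((c.2.choose).2.choose)
      exact h2 ▸ hb.choose_spec
    · intro x n hn
      exact ⟨n, ⟨⟨x, hn⟩, hfval n ⟨x, hn⟩ x hn⟩, rfl⟩
    · exact asmHom_ext fun c => Subtype.ext (hk₁val c)
    · exact asmHom_ext fun x => Subtype.ext rfl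
  · -- Part 4: naturality with respect to pullbacks
    intro A' h B f W w f' hRec V v₁ v₂ hAsm
    -- the canonical pullback object in Rec, via pairing
    let Pset : RecCat := RecCat.ofSet
      {n : ℕ | ∃ (hb : n.unpair.1 ∈ B.carrier) (ha : n.unpair.2 ∈ A'.carrier),
        happ f ⟨n.unpair.1, hb⟩ = happ h ⟨n.unpair.2, ha⟩}
    let π₁ : Pset ⟶ B := ⟨fun p => ⟨p.val.unpair.1, p.2.choose⟩,
      (fun n => n.unpair.1 : ℕ → ℕ), Nat.Partrec.of_primrec Nat.Primrec.left,
      fun _ => rfl⟩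
    let π₂ : Pset ⟶ A' := ⟨fun p => ⟨p.val.unpair.2, p.2.choose_spec.choose⟩,
      (fun n => n.unpair.2 : ℕ → ℕ), Nat.Partrec.of_primrec Nat.Primrec.right,
      fun _ => rfl⟩
    have sq : π₁ ≫ f = π₂ ≫ h :=
      recHom_ext fun p => Subtype.ext p.2.choose_spec.choose_spec
    let σ : Pset ⟶ W := hRec.lift π₁ π₂ sq
    have hσ₂ : σ ≫ f' = π₂ := hRec.lift_snd π₁ π₂ sq
    have hf'σ : ∀ p : Pset, happ f' (σ.1 p) = p.val.unpair.2 := fun p =>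
      congrArg Subtype.val (congrFun (congrArg Subtype.val hσ₂) p)
    obtain ⟨s, ps, hs⟩ := σ.2
    have hv12 : ∀ vv : V.carrier, (v₁.1 vv).val = happ h (v₂.1 vv) := fun vv =>
      congrArg Subtype.val (congrFun (congrArg Subtype.val hAsm.w) vv)
    have hpair : ∀ (b a : ℕ) (hb : b ∈ B.carrier) (ha : a ∈ A'.carrier),
        happ f ⟨b, hb⟩ = happ h ⟨a, ha⟩ → Nat.pair b a ∈ Pset.carrier := by
      intro b a hb ha heq
      have h1 : (Nat.pair b a).unpair = (b, a) := Nat.unpair_pair b a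
      show ∃ (hb' : (Nat.pair b a).unpair.1 ∈ B.carrier)
        (ha' : (Nat.pair b a).unpair.2 ∈ A'.carrier),
        happ f ⟨(Nat.pair b a).unpair.1, hb'⟩ = happ h ⟨(Nat.pair b a).unpair.2, ha'⟩
      rw [h1]
      exact ⟨hb, ha, heq⟩
    -- the map k₂ : V ⟶ imAsm f'
    have memIm' : ∀ vv : V.carrier, (v₂.1 vv).val ∈ imageSet f' := by
      intro vv
      obtain ⟨b, hbf⟩ := (v₁.1 vv).2
      have heq : happ f b = happ h (v₂.1 vv) := hbf.trans (hv12 vv)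
      have hmem : Nat.pair b.val (v₂.1 vv).val ∈ Pset.carrier :=
        hpair b.val (v₂.1 vv).val b.2 (v₂.1 vv).2 heq
      refine ⟨σ.1 ⟨_, hmem⟩, ?_⟩
      rw [hf'σ ⟨_, hmem⟩]
      simp
    obtain ⟨t₁, pt₁, ht₁⟩ := v₁.2
    obtain ⟨t₂, pt₂, ht₂⟩ := v₂.2
    let g : ℕ →. ℕ := fun n => (t₁ n).bind fun b => (t₂ n).bind fun a => s (Nat.pair b a)
    have hgp : Nat.Partrec g := by
      rw [← Partrec.nat_iff]
      exact (Partrec.nat_iff.2 pt₁).bind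
        (((Partrec.nat_iff.2 pt₂).comp Computable.fst).bind
          ((Partrec.nat_iff.2 ps).comp
            ((Primrec₂.natPair.comp (Primrec.snd.comp Primrec.fst) Primrec.snd).to_comp)))
    have ktrk : ∀ vv : V.carrier, ∀ n ∈ V.real vv,
        ∃ r ∈ (imAsm f').real ⟨(v₂.1 vv).val, memIm' vv⟩, g n = Part.some r := by
      intro vv n hn
      obtain ⟨b, hb, ht1⟩ := ht₁ vv n hn
      obtain ⟨a, ha, ht2⟩ := ht₂ vv n hn
      obtain ⟨hbB, hfb⟩ := hb
      have haa : a = (v₂.1 vv).val := ha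
      subst haa
      have hmem : Nat.pair b (v₂.1 vv).val ∈ Pset.carrier :=
        hpair b (v₂.1 vv).val hbB (v₂.1 vv).2 (hfb.trans (hv12 vv))
      refine ⟨(σ.1 ⟨_, hmem⟩).val, ⟨(σ.1 ⟨_, hmem⟩).2, ?_⟩, ?_⟩
      · have := hf'σ ⟨_, hmem⟩
        simp only [Nat.unpair_pair] at this
        exact this
      · show (t₁ n).bind _ = _
        rw [ht1, Part.bind_some, ht2, Part.bind_some, hs ⟨_, hmem⟩]
    -- the map p : imAsm f' ⟶ imAsm f, for the pullback lift
    have hwf : ∀ w₀ : W, happ f (w.1 w₀) = happ h (f'.1 w₀) := fun w₀ =>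
      congrArg Subtype.val (congrFun (congrArg Subtype.val hRec.w) w₀)
    have memf : ∀ c : (imAsm f').carrier, happ h ((jHom f').1 c) ∈ imageSet f := by
      intro c
      obtain ⟨w₀, hw₀⟩ := c.2
      refine ⟨w.1 w₀, (hwf w₀).trans ?_⟩
      exact congrArg (fun y => happ h y) (Subtype.ext hw₀)
    obtain ⟨tw, ptw, htw⟩ := w.2
    have ptrk : ∀ c : (imAsm f').carrier, ∀ r ∈ (imAsm f').real c,
        ∃ v ∈ (imAsm f).real ⟨happ h ((jHom f').1 c), memf c⟩, tw r = Part.some v := by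
      rintro c r ⟨hrW, hfr⟩
      refine ⟨(w.1 ⟨r, hrW⟩).val, ⟨(w.1 ⟨r, hrW⟩).2, ?_⟩, htw ⟨r, hrW⟩⟩
      have h1 : happ f (w.1 ⟨r, hrW⟩) = happ h (f'.1 ⟨r, hrW⟩) := hwf ⟨r, hrW⟩
      have h2 : f'.1 ⟨r, hrW⟩ = (jHom f').1 c := Subtype.ext hfr
      exact h1.trans (congrArg (fun y => happ h y) h2)
    let p : imAsm f' ⟶ imAsm f := ⟨fun c => ⟨happ h ((jHom f').1 c), memf c⟩, tw, ptw, ptrk⟩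
    have sq2 : p ≫ jHom f = jHom f' ≫ Sgl.map h :=
      asmHom_ext fun c => Subtype.ext rfl
    refine ⟨hAsm.lift p (jHom f') sq2, ⟨fun vv => ⟨(v₂.1 vv).val, memIm' vv⟩, g, hgp, ktrk⟩,
      hAsm.lift_snd p (jHom f') sq2, ?_⟩
    exact asmHom_ext fun vv => Subtype.ext rfl

end RecPaper
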